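/- Let G be a connected, locally compact, second countable, unimodular topological group with Haar measure λ, U : G → U(H) a strongly continuous square integrable projective unitary representation (∫_G |⟨ψ, U(g)φ⟩|² dλ(g) = d > 0 for all unit vectors ψ, φ), and E : ℬ(G) → L(H) a covariant observable, i.e., U(g)*E(B)U(g) = E(g⁻¹B) for all g ∈ G, B ∈ ℬ(G). Suppose f : G → ℂ is measurable and D(f,E) ⊆ D(f(g·),E) for all g ∈ G. Then U(g)D(f,E) = D(f,E) for all g ∈ G, D(f,E) is either {0} or dense in H, and moreover U(g)*L(f,E)U(g) ⊆ L(f(g·),E) for all g ∈ G (operator inclusion, i.e., extension of operators). -/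

import Mathlib

open MeasureTheory Filter Topology ComplexConjugate
open scoped ENNReal NNReal

noncomputable section

local notation "⟪" x ", " y "⟫" => @inner ℂ _ _ x y

/-- The total variation measure of a complex measure. -/
def MeasureTheory.ComplexMeasure.tv {Ω : Type*} [MeasurableSpace Ω]
    (ν : MeasureTheory.ComplexMeasure Ω) : MeasureTheory.Measure Ω :=
  (MeasureTheory.ComplexMeasure.re ν).totalVariation +
    (MeasureTheory.ComplexMeasure.im ν).totalVariation

/-- `f` is integrable with respect to the complex measure `ν`: it is integrable with respect
to the total variation measure of `ν`. -/
def MeasureTheory.ComplexMeasure.CIntegrable {Ω : Type*} [MeasurableSpace Ω]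
    (ν : MeasureTheory.ComplexMeasure Ω) (f : Ω → ℂ) : Prop :=
  MeasureTheory.Integrable f ν.tv

/-- The integral of a complex function against a signed measure. -/
def MeasureTheory.SignedMeasure.cintegral {Ω : Type*} [MeasurableSpace Ω]
    (σ : MeasureTheory.SignedMeasure Ω) (f : Ω → ℂ) : ℂ :=
  (∫ x, f x ∂σ.toJordanDecomposition.posPart) - ∫ x, f x ∂σ.toJordanDecomposition.negPart

/-- The integral of a complex function against a complex measure. -/
def MeasureTheory.ComplexMeasure.cintegral {Ω : Type*} [MeasurableSpace Ω]
    (ν : MeasureTheory.ComplexMeasure Ω) (f : Ω → ℂ) : ℂ :=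
  (MeasureTheory.ComplexMeasure.re ν).cintegral f +
    Complex.I * (MeasureTheory.ComplexMeasure.im ν).cintegral f


namespace Stmt11Aux

variable {α : Type*} {β : Type*} [MeasurableSpace α] [MeasurableSpace β]

open MeasureTheory

lemma tv_fin (s : SignedMeasure α) : IsFiniteMeasure s.totalVariation := by
  rw [SignedMeasure.totalVariation]; infer_instance

lemma abs_apply_le_tv (s : SignedMeasure α) {i : Set α} (hi : MeasurableSet i) :
    |s i| ≤ (s.totalVariation i).toReal := by
  conv_lhs => rw [← s.toSignedMeasure_toJordanDecomposition]
  rw [JordanDecomposition.toSignedMeasure, Measure.toSignedMeasure_sub_apply hi,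
    SignedMeasure.totalVariation, Measure.add_apply,
    ENNReal.toReal_add (measure_ne_top _ _) (measure_ne_top _ _)]
  refine (abs_sub _ _).trans ?_
  rw [abs_of_nonneg measureReal_nonneg, abs_of_nonneg measureReal_nonneg]
  exact le_rfl

lemma tv_split (s : SignedMeasure α) {i k : Set α} (hi : MeasurableSet i)
    (hk : MeasurableSet k) :
    (s.totalVariation (k ∩ i)).toReal + (s.totalVariation (kᶜ ∩ i)).toReal
      = (s.totalVariation i).toReal := by
  haveI := tv_fin s
  rw [Set.inter_comm k i, ← Set.diff_eq_compl_inter,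
    ← ENNReal.toReal_add (measure_ne_top _ _) (measure_ne_top _ _),
    measure_inter_add_diff i hk]

lemma totalVariation_add_le (s t : SignedMeasure α) :
    (s + t).totalVariation ≤ s.totalVariation + t.totalVariation := by
  have hfs := tv_fin s
  have hft := tv_fin t
  have hfst := tv_fin (s + t)
  refine Measure.le_iff.2 fun i hi => ?_
  obtain ⟨k, hk₁, hk₂, hk₃, hpos, hneg⟩ := (s + t).toJordanDecomposition_spec
  have h1 : (((s + t).totalVariation) i).toReal
      = (s + t) (k ∩ i) + -((s + t) (kᶜ ∩ i)) := by
    rw [SignedMeasure.totalVariation, Measure.add_apply, hpos, hneg,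
      SignedMeasure.toMeasureOfZeroLE_apply _ hk₂ hk₁ hi,
      SignedMeasure.toMeasureOfLEZero_apply _ hk₃ hk₁.compl hi,
      ENNReal.toReal_add ENNReal.coe_ne_top ENNReal.coe_ne_top]
    simp
  rw [← ENNReal.toReal_le_toReal (measure_ne_top _ _) (measure_ne_top _ _), h1,
    Measure.add_apply, ENNReal.toReal_add (measure_ne_top _ _) (measure_ne_top _ _)]
  have e1 : (s + t) (k ∩ i) = s (k ∩ i) + t (k ∩ i) := VectorMeasure.add_apply _ _ _
  have e2 : (s + t) (kᶜ ∩ i) = s (kᶜ ∩ i) + t (kᶜ ∩ i) := VectorMeasure.add_apply _ _ _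
  have b1 := abs_apply_le_tv s (hk₁.inter hi)
  have b2 := abs_apply_le_tv t (hk₁.inter hi)
  have b3 := abs_apply_le_tv s (hk₁.compl.inter hi)
  have b4 := abs_apply_le_tv t (hk₁.compl.inter hi)
  have c1 := tv_split s hi hk₁
  have c2 := tv_split t hi hk₁
  have a1 := abs_le.1 b1
  have a2 := abs_le.1 b2
  have a3 := abs_le.1 b3
  have a4 := abs_le.1 b4
  rw [e1, e2]
  linarith [a1.2, a2.2, a3.1, a4.1]

lemma tv_smul_real (r : ℝ) (s : SignedMeasure α) :
    (r • s).totalVariation = |r|.toNNReal • s.totalVariation := by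
  rw [SignedMeasure.totalVariation, SignedMeasure.totalVariation,
    SignedMeasure.toJordanDecomposition_smul_real]
  rcases le_or_gt 0 r with hr | hr
  · rw [JordanDecomposition.real_smul_nonneg _ _ hr, JordanDecomposition.smul_posPart,
      JordanDecomposition.smul_negPart, abs_of_nonneg hr, smul_add]
  · rw [JordanDecomposition.real_smul_posPart_neg _ _ hr,
      JordanDecomposition.real_smul_negPart_neg _ _ hr, abs_of_neg hr, smul_add, add_comm]

lemma re_add (ν₁ ν₂ : ComplexMeasure α) :
    ComplexMeasure.re (ν₁ + ν₂) = ComplexMeasure.re ν₁ + ComplexMeasure.re ν₂ :=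
  map_add _ _ _

lemma im_add (ν₁ ν₂ : ComplexMeasure α) :
    ComplexMeasure.im (ν₁ + ν₂) = ComplexMeasure.im ν₁ + ComplexMeasure.im ν₂ :=
  map_add _ _ _

lemma re_csmul (c : ℂ) (ν : ComplexMeasure α) :
    ComplexMeasure.re (c • ν) = c.re • ComplexMeasure.re ν + (-c.im) • ComplexMeasure.im ν := by
  ext i hi
  simp [ComplexMeasure.re_apply, ComplexMeasure.im_apply, VectorMeasure.smul_apply,
    VectorMeasure.add_apply, Complex.mul_re, smul_eq_mul]
  change Complex.re ((c • ν) i) = c.re * Complex.re (ν i) - c.im * Complex.im (ν i)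
  rw [VectorMeasure.smul_apply, smul_eq_mul, Complex.mul_re]

lemma im_csmul (c : ℂ) (ν : ComplexMeasure α) :
    ComplexMeasure.im (c • ν) = c.im • ComplexMeasure.re ν + c.re • ComplexMeasure.im ν := by
  ext i hi
  simp [ComplexMeasure.re_apply, ComplexMeasure.im_apply, VectorMeasure.smul_apply,
    VectorMeasure.add_apply, Complex.mul_im, smul_eq_mul]
  change Complex.im ((c • ν) i) = c.im * Complex.re (ν i) + c.re * Complex.im (ν i)
  rw [VectorMeasure.smul_apply, smul_eq_mul, Complex.mul_im]
  ring

lemma tv_zero : (0 : ComplexMeasure α).tv = 0 := by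
  rw [ComplexMeasure.tv, map_zero, map_zero, SignedMeasure.totalVariation_zero, add_zero]

lemma tv_add_le (ν₁ ν₂ : ComplexMeasure α) : (ν₁ + ν₂).tv ≤ ν₁.tv + ν₂.tv := by
  rw [ComplexMeasure.tv, re_add, im_add]
  calc (ComplexMeasure.re ν₁ + ComplexMeasure.re ν₂).totalVariation
        + (ComplexMeasure.im ν₁ + ComplexMeasure.im ν₂).totalVariation
      ≤ ((ComplexMeasure.re ν₁).totalVariation + (ComplexMeasure.re ν₂).totalVariation)
        + ((ComplexMeasure.im ν₁).totalVariation + (ComplexMeasure.im ν₂).totalVariation) :=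
        add_le_add (totalVariation_add_le _ _) (totalVariation_add_le _ _)
    _ = ν₁.tv + ν₂.tv := by rw [ComplexMeasure.tv, ComplexMeasure.tv]; abel

lemma tv_csmul_le (c : ℂ) (ν : ComplexMeasure α) :
    (c • ν).tv ≤ (((|c.re|.toNNReal + |c.im|.toNNReal : ℝ≥0)) : ℝ≥0∞) • ν.tv := by
  rw [← ENNReal.smul_def]
  rw [ComplexMeasure.tv, re_csmul, im_csmul]
  calc (c.re • ComplexMeasure.re ν + (-c.im) • ComplexMeasure.im ν).totalVariation
        + (c.im • ComplexMeasure.re ν + c.re • ComplexMeasure.im ν).totalVariation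
      ≤ (|c.re|.toNNReal • (ComplexMeasure.re ν).totalVariation
          + |(-c.im)|.toNNReal • (ComplexMeasure.im ν).totalVariation)
        + (|c.im|.toNNReal • (ComplexMeasure.re ν).totalVariation
          + |c.re|.toNNReal • (ComplexMeasure.im ν).totalVariation) := by
        refine add_le_add ?_ ?_ <;>
          · refine (totalVariation_add_le _ _).trans ?_
            rw [tv_smul_real, tv_smul_real]
    _ = (|c.re|.toNNReal + |c.im|.toNNReal : ℝ≥0) • ν.tv := by
        rw [abs_neg, ComplexMeasure.tv, smul_add, add_smul, add_smul]
        abel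

lemma CIntegrable.add {ν₁ ν₂ : ComplexMeasure α} {f : α → ℂ}
    (h₁ : ν₁.CIntegrable f) (h₂ : ν₂.CIntegrable f) : (ν₁ + ν₂).CIntegrable f :=
  (h₁.add_measure h₂).mono_measure (tv_add_le _ _)

lemma CIntegrable.csmul {ν : ComplexMeasure α} {f : α → ℂ} (c : ℂ)
    (h : ν.CIntegrable f) : (c • ν).CIntegrable f := by
  have h2 : Integrable f (((|c.re|.toNNReal + |c.im|.toNNReal : ℝ≥0) : ℝ≥0∞) • ν.tv) :=
    h.smul_measure ENNReal.coe_ne_top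
  exact Integrable.mono_measure h2 (tv_csmul_le c ν)

lemma CIntegrable.zero (f : α → ℂ) : (0 : ComplexMeasure α).CIntegrable f := by
  rw [ComplexMeasure.CIntegrable, tv_zero]
  exact integrable_zero_measure

/-- Push forward a Jordan decomposition by a measurable equivalence. -/
def jdMap (e : α ≃ᵐ β) (j : JordanDecomposition α) : JordanDecomposition β where
  posPart := j.posPart.map e
  negPart := j.negPart.map e
  posPart_finite := j.posPart.isFiniteMeasure_map e
  negPart_finite := j.negPart.isFiniteMeasure_map e
  mutuallySingular := by
    obtain ⟨u, hu, h1, h2⟩ := j.mutuallySingular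
    have hpre : e ⁻¹' (e.symm ⁻¹' u) = u := by ext x; simp
    have hpre' : e ⁻¹' (e.symm ⁻¹' u)ᶜ = uᶜ := by ext x; simp
    refine ⟨e.symm ⁻¹' u, e.symm.measurable hu, ?_, ?_⟩
    · rw [Measure.map_apply e.measurable (e.symm.measurable hu), hpre, h1]
    · rw [Measure.map_apply e.measurable (e.symm.measurable hu).compl, hpre', h2]

lemma jd_map (e : α ≃ᵐ β) (s : SignedMeasure α) :
    SignedMeasure.toJordanDecomposition (VectorMeasure.map s ⇑e)
      = jdMap e s.toJordanDecomposition := by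
  apply SignedMeasure.toJordanDecomposition_eq
  ext i hi
  rw [VectorMeasure.map_apply _ e.measurable hi, JordanDecomposition.toSignedMeasure,
    Measure.toSignedMeasure_sub_apply hi]
  conv_lhs => rw [← s.toSignedMeasure_toJordanDecomposition]
  rw [JordanDecomposition.toSignedMeasure,
    Measure.toSignedMeasure_sub_apply (e.measurable hi)]
  simp only [jdMap, Measure.real, Measure.map_apply e.measurable hi]

lemma tv_signed_map (e : α ≃ᵐ β) (s : SignedMeasure α) :
    SignedMeasure.totalVariation (VectorMeasure.map s ⇑e) = s.totalVariation.map e := by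
  rw [SignedMeasure.totalVariation, SignedMeasure.totalVariation, jd_map]
  simp only [jdMap]
  rw [← Measure.map_add _ _ e.measurable]

lemma re_map (e : α ≃ᵐ β) (ν : ComplexMeasure α) :
    ComplexMeasure.re (VectorMeasure.map ν ⇑e) = VectorMeasure.map (ComplexMeasure.re ν) ⇑e := by
  ext i hi
  simp only [ComplexMeasure.re_apply, VectorMeasure.mapRange_apply,
    VectorMeasure.map_apply _ e.measurable hi]
  change Complex.re (VectorMeasure.map ν ⇑e i) = Complex.re (ν (e ⁻¹' i))
  rw [VectorMeasure.map_apply _ e.measurable hi]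

lemma im_map (e : α ≃ᵐ β) (ν : ComplexMeasure α) :
    ComplexMeasure.im (VectorMeasure.map ν ⇑e) = VectorMeasure.map (ComplexMeasure.im ν) ⇑e := by
  ext i hi
  simp only [ComplexMeasure.im_apply, VectorMeasure.mapRange_apply,
    VectorMeasure.map_apply _ e.measurable hi]
  change Complex.im (VectorMeasure.map ν ⇑e i) = Complex.im (ν (e ⁻¹' i))
  rw [VectorMeasure.map_apply _ e.measurable hi]

lemma tv_map (e : α ≃ᵐ β) (ν : ComplexMeasure α) :
    ComplexMeasure.tv (VectorMeasure.map ν ⇑e) = ν.tv.map e := by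
  rw [ComplexMeasure.tv, ComplexMeasure.tv, re_map, im_map, tv_signed_map, tv_signed_map,
    ← Measure.map_add _ _ e.measurable]

lemma cintegrable_map (e : α ≃ᵐ β) (ν : ComplexMeasure α) (f : β → ℂ) :
    ComplexMeasure.CIntegrable (VectorMeasure.map ν ⇑e) f ↔ ν.CIntegrable (f ∘ e) := by
  rw [ComplexMeasure.CIntegrable, tv_map, integrable_map_equiv e f, ComplexMeasure.CIntegrable]

lemma scintegral_map (e : α ≃ᵐ β) (s : SignedMeasure α) (f : β → ℂ) :
    SignedMeasure.cintegral (VectorMeasure.map s ⇑e) f = s.cintegral (f ∘ e) := by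
  rw [SignedMeasure.cintegral, SignedMeasure.cintegral, jd_map]
  show (∫ x, f x ∂(s.toJordanDecomposition.posPart.map e)) -
      (∫ x, f x ∂(s.toJordanDecomposition.negPart.map e)) = _
  rw [MeasureTheory.integral_map_equiv e f, MeasureTheory.integral_map_equiv e f]
  rfl

lemma cintegral_map (e : α ≃ᵐ β) (ν : ComplexMeasure α) (f : β → ℂ) :
    ComplexMeasure.cintegral (VectorMeasure.map ν ⇑e) f = ν.cintegral (f ∘ e) := by
  rw [ComplexMeasure.cintegral, ComplexMeasure.cintegral, re_map, im_map,
    scintegral_map, scintegral_map]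

end Stmt11Aux

open Stmt11Aux

/-- Let `G` be a connected, locally compact, second countable, unimodular
group with Haar measure `λ`, `U` a strongly continuous square integrable projective unitary
representation, and `E` a `U`-covariant observable. If `f : G → ℂ` is measurable and
`D(f,E) ⊆ D(f(g·),E)` for all `g`, then `U(g)D(f,E) = D(f,E)` for all `g`, `D(f,E)` is
either `{0}` or dense, and `U(g)*L(f,E)U(g) ⊆ L(f(g·),E)` for all `g`. -/
theorem stmt11 {G : Type*} [Group G] [TopologicalSpace G] [IsTopologicalGroup G]
    [LocallyCompactSpace G] [SecondCountableTopology G] [ConnectedSpace G]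
    [MeasurableSpace G] [BorelSpace G]
    (lam : Measure G) [lam.IsHaarMeasure] [lam.IsMulRightInvariant]
    {H : Type*} [NormedAddCommGroup H] [InnerProductSpace ℂ H] [CompleteSpace H]
    (U : G → H →L[ℂ] H)
    (hUiso : ∀ (g : G) (φ : H), ‖U g φ‖ = ‖φ‖)
    (hUsurj : ∀ g : G, Function.Surjective (U g))
    (c : G → G → ℂ) (hc : ∀ g h : G, ‖c g h‖ = 1)
    (hproj : ∀ g h : G, (U g).comp (U h) = c g h • U (g * h))
    (hUcont : ∀ φ : H, Continuous fun g => U g φ)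
    (d : ℝ) (hd : 0 < d)
    (hsq : ∀ ψ φ : H, ‖ψ‖ = 1 → ‖φ‖ = 1 → ∫ g, ‖⟪ψ, U g φ⟫‖ ^ 2 ∂lam = d)
    (E : Set G → H →L[ℂ] H)
    (hEpos : ∀ B : Set G, MeasurableSet B → (E B).IsPositive)
    (hEone : E Set.univ = 1)
    (ν : H → H → MeasureTheory.ComplexMeasure G)
    (hν : ∀ (ψ φ : H) (B : Set G), MeasurableSet B → ν ψ φ B = ⟪ψ, E B φ⟫)
    (hcov : ∀ (g : G) (B : Set G), MeasurableSet B →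
      ((ContinuousLinearMap.adjoint (U g)).comp ((E B).comp (U g))) =
        E ((fun h => g * h) ⁻¹' B))
    (f : G → ℂ) (hf : Measurable f)
    (hdom : ∀ g : G,
      {φ : H | ∀ ψ : H, (ν ψ φ).CIntegrable f} ⊆
      {φ : H | ∀ ψ : H, (ν ψ φ).CIntegrable fun h => f (g * h)})
    -- `Lf` is the operator integral `L(f,E)` on `D(f,E)`
    (Lf : H → H)
    (hLf : ∀ φ ∈ {φ : H | ∀ ψ : H, (ν ψ φ).CIntegrable f},
      ∀ ψ : H, ⟪ψ, Lf φ⟫ = (ν ψ φ).cintegral f)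
    -- `Lg g` is the operator integral `L(f(g·),E)` on `D(f(g·),E)`
    (Lg : G → H → H)
    (hLg : ∀ (g : G), ∀ φ ∈ {φ : H | ∀ ψ : H, (ν ψ φ).CIntegrable fun h => f (g * h)},
      ∀ ψ : H, ⟪ψ, Lg g φ⟫ = (ν ψ φ).cintegral fun h => f (g * h)) :
    (∀ g : G, (U g) '' {φ : H | ∀ ψ : H, (ν ψ φ).CIntegrable f} =
        {φ : H | ∀ ψ : H, (ν ψ φ).CIntegrable f}) ∧
    ({φ : H | ∀ ψ : H, (ν ψ φ).CIntegrable f} = {0} ∨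
      Dense {φ : H | ∀ ψ : H, (ν ψ φ).CIntegrable f}) ∧
    -- the operator inclusion U(g)* L(f,E) U(g) ⊆ L(f(g·),E)
    (∀ (g : G) (φ : H), (∀ ψ : H, (ν ψ (U g φ)).CIntegrable f) →
      (∀ ψ : H, (ν ψ φ).CIntegrable fun h => f (g * h)) ∧
      (ContinuousLinearMap.adjoint (U g)) (Lf (U g φ)) = Lg g φ) := by
  
  -- Notation and basic unitary facts
  classical
  set D : Set H := {φ : H | ∀ ψ : H, (ν ψ φ).CIntegrable f} with hDdef
  have hUli : ∀ g : G, ∀ x y : H, ⟪U g x, U g y⟫ = ⟪x, y⟫ := fun g x y =>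
    LinearIsometry.inner_map_map ⟨(U g : H →ₗ[ℂ] H), hUiso g⟩ x y
  have hadjUU : ∀ (g : G) (x : H), ContinuousLinearMap.adjoint (U g) (U g x) = x := by
    intro g x
    refine ext_inner_left ℂ fun y => ?_
    rw [ContinuousLinearMap.adjoint_inner_right]
    exact hUli g y x
  -- the measurable equivalence of left translation
  let e : G → G ≃ᵐ G := fun g => (Homeomorph.mulLeft g).toMeasurableEquiv
  have he : ∀ g : G, ⇑(e g) = fun h => g * h := fun g => rfl
  -- the key covariance identity for the measures
  have hmap : ∀ (g : G) (ψ φ : H),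
      ν (U g ψ) (U g φ) = VectorMeasure.map (ν ψ φ) ⇑(e g) := by
    intro g ψ φ
    refine VectorMeasure.ext fun i hi => ?_
    rw [VectorMeasure.map_apply _ (e g).measurable hi, hν _ _ i hi,
      hν _ _ _ (hi.preimage (e g).measurable)]
    have h1 : ⟪U g ψ, E i (U g φ)⟫
        = ⟪ψ, (ContinuousLinearMap.adjoint (U g)) ((E i) (U g φ))⟫ :=
      (ContinuousLinearMap.adjoint_inner_right _ _ _).symm
    have h2 : (ContinuousLinearMap.adjoint (U g)) ((E i) (U g φ))
        = E ((fun h => g * h) ⁻¹' i) φ := by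
      have := congrArg (fun A : H →L[ℂ] H => A φ) (hcov g i hi)
      simpa using this
    rw [h1, h2, he]
  -- the fundamental equivalence : U g φ ∈ D ↔ φ ∈ D(f(g·))
  have hequiv : ∀ (g : G) (φ : H),
      (U g φ ∈ D) ↔ ∀ ψ : H, (ν ψ φ).CIntegrable fun h => f (g * h) := by
    intro g φ
    constructor
    · intro hmem ψ
      have h1 := hmem (U g ψ)
      rw [hmap g ψ φ] at h1
      exact (cintegrable_map (e g) (ν ψ φ) f).1 h1
    · intro hall ψ
      obtain ⟨ψ', rfl⟩ := hUsurj g ψ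
      rw [hmap g ψ' φ]
      exact (cintegrable_map (e g) (ν ψ' φ) f).2 (hall ψ')
  -- linearity of the measures in the second entry
  have hν_add : ∀ ψ φ₁ φ₂ : H, ν ψ (φ₁ + φ₂) = ν ψ φ₁ + ν ψ φ₂ := by
    intro ψ φ₁ φ₂
    refine VectorMeasure.ext fun i hi => ?_
    rw [VectorMeasure.add_apply, hν _ _ i hi, hν _ _ i hi, hν _ _ i hi, map_add,
      inner_add_right]
  have hν_smul : ∀ (a : ℂ) (ψ φ : H), ν ψ (a • φ) = a • ν ψ φ := by
    intro a ψ φ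
    refine VectorMeasure.ext fun i hi => ?_
    rw [VectorMeasure.smul_apply, hν _ _ i hi, hν _ _ i hi, _root_.map_smul, inner_smul_right]
    rfl
  have hν_zero : ∀ ψ : H, ν ψ 0 = 0 := by
    intro ψ
    refine VectorMeasure.ext fun i hi => ?_
    rw [hν _ _ i hi, map_zero, inner_zero_right, VectorMeasure.zero_apply]
  -- D is a submodule
  have hD0 : (0 : H) ∈ D := by
    intro ψ
    rw [hν_zero]
    exact CIntegrable.zero f
  have hDadd : ∀ {φ₁ φ₂ : H}, φ₁ ∈ D → φ₂ ∈ D → φ₁ + φ₂ ∈ D := by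
    intro φ₁ φ₂ h₁ h₂ ψ
    rw [hν_add]
    exact CIntegrable.add (h₁ ψ) (h₂ ψ)
  have hDsmul : ∀ (a : ℂ) {φ : H}, φ ∈ D → a • φ ∈ D := by
    intro a φ hφ ψ
    rw [hν_smul]
    exact CIntegrable.csmul a (hφ ψ)
  have hUD : ∀ (g : G), ∀ φ ∈ D, U g φ ∈ D := fun g φ hφ => (hequiv g φ).2 (hdom g hφ)
  -- Part 1
  have part1 : ∀ g : G, U g '' D = D := by
    intro g
    apply Set.Subset.antisymm
    · rintro _ ⟨φ, hφ, rfl⟩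
      exact hUD g φ hφ
    · intro φ hφ
      have h1 : U g⁻¹ φ ∈ D := hUD g⁻¹ φ hφ
      have hs1 : c g g⁻¹ ≠ 0 := by
        intro h0
        simpa [h0] using hc g g⁻¹
      have hs2 : c 1 1 ≠ 0 := by
        intro h0
        simpa [h0] using hc 1 1
      have hs : c g g⁻¹ * c 1 1 ≠ 0 := mul_ne_zero hs1 hs2
      refine ⟨(c g g⁻¹ * c 1 1)⁻¹ • U g⁻¹ φ, hDsmul _ h1, ?_⟩
      have hU1 : ∀ x : H, U 1 x = c 1 1 • x := by
        intro x
        obtain ⟨y, rfl⟩ := hUsurj 1 x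
        have := congrArg (fun A : H →L[ℂ] H => A y) (hproj 1 1)
        simpa using this
      have h2 : U g (U g⁻¹ φ) = (c g g⁻¹ * c 1 1) • φ := by
        have h3 := congrArg (fun A : H →L[ℂ] H => A φ) (hproj g g⁻¹)
        simp only [ContinuousLinearMap.comp_apply, ContinuousLinearMap.smul_apply,
          mul_inv_cancel] at h3
        rw [h3, hU1, smul_smul]
      rw [_root_.map_smul, h2, smul_smul, inv_mul_cancel₀ hs, one_smul]
  refine ⟨part1, ?_, ?_⟩
  · -- Part 2
    by_cases hcase : D = {0}
    · exact Or.inl hcase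
    right
    have hex : ∃ φ₀ ∈ D, φ₀ ≠ 0 := by
      by_contra hno
      push_neg at hno
      refine hcase (Set.Subset.antisymm (fun x hx => hno x hx) ?_)
      intro x hx
      rw [Set.mem_singleton_iff] at hx
      rw [hx]
      exact hD0
    obtain ⟨φ₀, hφ₀D, hφ₀⟩ := hex
    set K : Submodule ℂ H := Submodule.span ℂ (Set.range fun g => U g φ₀) with hK
    have hKD : (K : Set H) ⊆ D := by
      intro x hx
      refine Submodule.span_induction ?_ hD0 (fun a b _ _ ha hb => hDadd ha hb)
        (fun a b _ hb => hDsmul a hb) hx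
      rintro _ ⟨g, rfl⟩
      exact hUD g φ₀ hφ₀D
    have hKbot : Kᗮ = ⊥ := by
      rw [Submodule.eq_bot_iff]
      intro ψ hψ
      by_contra hne
      have horth : ∀ g : G, ⟪ψ, U g φ₀⟫ = 0 := by
        intro g
        have h0 : ⟪U g φ₀, ψ⟫ = 0 :=
          (Submodule.mem_orthogonal K ψ).1 hψ (U g φ₀) (Submodule.subset_span ⟨g, rfl⟩)
        rw [← inner_conj_symm, h0, map_zero]
      have hψn : ‖ψ‖ ≠ 0 := norm_ne_zero_iff.2 hne
      have hφ₀n : ‖φ₀‖ ≠ 0 := norm_ne_zero_iff.2 hφ₀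
      have hnψ : ‖(‖ψ‖ : ℂ)⁻¹ • ψ‖ = 1 := by
        rw [norm_smul, norm_inv, Complex.norm_real, Real.norm_eq_abs,
          abs_of_nonneg (norm_nonneg ψ)]
        exact inv_mul_cancel₀ hψn
      have hnφ : ‖(‖φ₀‖ : ℂ)⁻¹ • φ₀‖ = 1 := by
        rw [norm_smul, norm_inv, Complex.norm_real, Real.norm_eq_abs,
          abs_of_nonneg (norm_nonneg φ₀)]
        exact inv_mul_cancel₀ hφ₀n
      have hzero : ∀ g : G, ⟪(‖ψ‖ : ℂ)⁻¹ • ψ, U g ((‖φ₀‖ : ℂ)⁻¹ • φ₀)⟫ = (0 : ℂ) := by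
        intro g
        rw [_root_.map_smul, inner_smul_left, inner_smul_right, horth]
        simp
      have hd' := hsq ((‖ψ‖ : ℂ)⁻¹ • ψ) ((‖φ₀‖ : ℂ)⁻¹ • φ₀) hnψ hnφ
      rw [show (fun g => ‖⟪(‖ψ‖ : ℂ)⁻¹ • ψ, U g ((‖φ₀‖ : ℂ)⁻¹ • φ₀)⟫‖ ^ 2)
          = fun _ : G => (0 : ℝ) from funext fun g => by rw [hzero g]; simp] at hd'
      rw [integral_zero] at hd'
      exact hd.ne hd'
    have hKdense : Dense (K : Set H) :=
      Submodule.dense_iff_topologicalClosure_eq_top.2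
        (Submodule.topologicalClosure_eq_top_iff.2 hKbot)
    exact hKdense.mono hKD
  · -- Part 3
    intro g φ hmem
    have hmem' : U g φ ∈ D := hmem
    have hφg : ∀ ψ : H, (ν ψ φ).CIntegrable fun h => f (g * h) := (hequiv g φ).1 hmem'
    refine ⟨hφg, ?_⟩
    refine ext_inner_left ℂ fun ψ => ?_
    rw [ContinuousLinearMap.adjoint_inner_right, hLf (U g φ) hmem' (U g ψ), hLg g φ hφg ψ,
      hmap g ψ φ]
    exact cintegral_map (e g) (ν ψ φ) f
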